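/- Let H ∈ R^{m×p} have linearly independent columns, let g ∈ R^m, and assume there exists u_0 ∈ R^p with H u_0 ≤ g. Then the polyhedron L = {u ∈ R^p : H u ≤ g} is bounded if and only if the optimal value f* of the linear program: minimize e^T H u subject to H u ≤ 0 and ‖u‖_∞ ≤ 1 (where e is the all-ones vector in R^m) is nonnegative. -/

import Mathlib

open Matrix

private lemma stmt8_inj {m p : ℕ} (H : Matrix (Fin m) (Fin p) ℝ)
    (hindep : LinearIndependent ℝ (fun j : Fin p => (fun i : Fin m => H i j))) :
    ∀ u : Fin p → ℝ, H.mulVec u = 0 → u = 0 := by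
  intro u hu
  rw [Fintype.linearIndependent_iff] at hindep
  funext j
  refine hindep u ?_ j
  funext i
  have := congrFun hu i
  simpa [Matrix.mulVec, dotProduct, Finset.sum_apply, mul_comm] using this

/-- For `H` with linearly independent columns and a feasible point `u₀` of
`L = {u : H u ≤ g}`, the polyhedron `L` is bounded iff the optimal value of the
linear program `min eᵀHu  s.t.  Hu ≤ 0, ‖u‖∞ ≤ 1` is nonnegative. -/
theorem stmt_8 {m p : ℕ} (H : Matrix (Fin m) (Fin p) ℝ) (g : Fin m → ℝ)
    (hindep : LinearIndependent ℝ (fun j : Fin p => (fun i : Fin m => H i j)))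
    (u₀ : Fin p → ℝ) (hu₀ : ∀ i, H.mulVec u₀ i ≤ g i) :
    Bornology.IsBounded {u : Fin p → ℝ | ∀ i, H.mulVec u i ≤ g i} ↔
      0 ≤ sInf {v : ℝ | ∃ u : Fin p → ℝ,
        (∀ i, H.mulVec u i ≤ 0) ∧ (∀ j, |u j| ≤ 1) ∧ v = ∑ i, H.mulVec u i} := by
  classical
  have hinj := stmt8_inj H hindep
  set S : Set ℝ := {v : ℝ | ∃ u : Fin p → ℝ,
      (∀ i, H.mulVec u i ≤ 0) ∧ (∀ j, |u j| ≤ 1) ∧ v = ∑ i, H.mulVec u i} with hS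
  have hS0 : (0 : ℝ) ∈ S := ⟨0, by simp, by simp, by simp⟩
  have hSbdd : BddBelow S := by
    refine ⟨-(∑ i, ∑ j, |H i j|), ?_⟩
    rintro v ⟨u, -, hu1, rfl⟩
    have hterm : ∀ i, -(∑ j, |H i j|) ≤ H.mulVec u i := by
      intro i
      have habs : |H.mulVec u i| ≤ ∑ j, |H i j| := by
        calc |H.mulVec u i| ≤ ∑ j, |H i j * u j| := by
              simpa [Matrix.mulVec, dotProduct] using
                Finset.abs_sum_le_sum_abs (fun j => H i j * u j) Finset.univ
          _ ≤ ∑ j, |H i j| := by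
              refine Finset.sum_le_sum fun j _ => ?_
              rw [abs_mul]
              exact mul_le_of_le_one_right (abs_nonneg _) (hu1 j)
      have := neg_abs_le (H.mulVec u i)
      linarith
    calc -(∑ i, ∑ j, |H i j|) = ∑ i, -(∑ j, |H i j|) := by
          rw [Finset.sum_neg_distrib]
      _ ≤ ∑ i, H.mulVec u i := Finset.sum_le_sum fun i _ => hterm i
  -- The key reformulation: the recession cone is trivial.
  have key : (0 ≤ sInf S) ↔ ∀ u : Fin p → ℝ, (∀ i, H.mulVec u i ≤ 0) → u = 0 := by
    constructor
    · intro hle u hu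
      by_contra hne
      have hM : (0 : ℝ) < ‖u‖ := norm_pos_iff.mpr hne
      set w : Fin p → ℝ := ‖u‖⁻¹ • u with hw
      have hw0 : ∀ i, H.mulVec w i ≤ 0 := by
        intro i
        have : H.mulVec w i = ‖u‖⁻¹ * H.mulVec u i := by
          rw [hw, Matrix.mulVec_smul]; simp
        rw [this]
        exact mul_nonpos_of_nonneg_of_nonpos (by positivity) (hu i)
      have hw1 : ∀ j, |w j| ≤ 1 := by
        intro j
        have h1 : |u j| ≤ ‖u‖ := by
          simpa [Real.norm_eq_abs] using norm_le_pi_norm u j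
        have : |w j| = ‖u‖⁻¹ * |u j| := by
          simp [hw, abs_mul, abs_of_pos (inv_pos.mpr hM)]
        rw [this]
        calc ‖u‖⁻¹ * |u j| ≤ ‖u‖⁻¹ * ‖u‖ := by
              exact mul_le_mul_of_nonneg_left h1 (by positivity)
          _ = 1 := inv_mul_cancel₀ hM.ne'
      have hmem : (∑ i, H.mulVec w i) ∈ S := ⟨w, hw0, hw1, rfl⟩
      have hge : 0 ≤ ∑ i, H.mulVec w i := le_trans hle (csInf_le hSbdd hmem)
      have hle' : ∑ i, H.mulVec w i ≤ 0 :=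
        Finset.sum_nonpos fun i _ => hw0 i
      have hzero : ∀ i ∈ Finset.univ, H.mulVec w i = 0 := by
        rw [← Finset.sum_eq_zero_iff_of_nonpos fun i _ => hw0 i]
        exact le_antisymm hle' hge
      have : w = 0 := hinj w (funext fun i => hzero i (Finset.mem_univ i))
      have : u = 0 := by
        have := congrArg (fun x => ‖u‖ • x) this
        simpa [hw, smul_smul, mul_inv_cancel₀ hM.ne'] using this
      exact hne this
    · intro hrec
      refine le_csInf ⟨0, hS0⟩ ?_
      rintro v ⟨u, hu0, -, rfl⟩
      have : u = 0 := hrec u hu0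
      simp [this]
  rw [key]
  constructor
  · -- bounded → trivial recession cone
    intro hbdd u hu
    obtain ⟨C, hC⟩ := (isBounded_iff_forall_norm_le).mp hbdd
    by_contra hne
    have hM : (0 : ℝ) < ‖u‖ := norm_pos_iff.mpr hne
    set t : ℝ := (C + ‖u₀‖ + 1) / ‖u‖ with ht
    have ht0 : 0 ≤ t := by
      have hC0 : 0 ≤ C := le_trans (norm_nonneg u₀) (hC u₀ hu₀)
      positivity
    have hmem : u₀ + t • u ∈ {u : Fin p → ℝ | ∀ i, H.mulVec u i ≤ g i} := by
      intro i
      have : H.mulVec (u₀ + t • u) i = H.mulVec u₀ i + t * H.mulVec u i := by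
        rw [Matrix.mulVec_add, Matrix.mulVec_smul]; simp
      rw [this]
      have : t * H.mulVec u i ≤ 0 := mul_nonpos_of_nonneg_of_nonpos ht0 (hu i)
      linarith [hu₀ i]
    have h1 : ‖t • u‖ ≤ C + ‖u₀‖ := by
      calc ‖t • u‖ = ‖u₀ + t • u - u₀‖ := by ring_nf
        _ ≤ ‖u₀ + t • u‖ + ‖u₀‖ := norm_sub_le _ _
        _ ≤ C + ‖u₀‖ := by linarith [hC _ hmem]
    have h2 : ‖t • u‖ = C + ‖u₀‖ + 1 := by
      rw [norm_smul, Real.norm_eq_abs, abs_of_nonneg ht0, ht,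
        div_mul_cancel₀ _ hM.ne']
    linarith [h1, h2.symm.le]
  · -- trivial recession cone → bounded
    intro hrec
    rcases Nat.eq_zero_or_pos p with hp | hp
    · -- p = 0 : the whole space is a subsingleton
      subst hp
      rw [isBounded_iff_forall_norm_le]
      exact ⟨0, fun x _ => by
        have : x = 0 := Subsingleton.elim x 0
        simp [this]⟩
    · -- p > 0 : compactness argument on the unit sphere
      set φ : (Fin p → ℝ) → ℝ := fun d => ∑ i, max (H.mulVec d i) 0 with hφ
      have hφcont : Continuous φ := by
        refine continuous_finset_sum _ fun i _ => Continuous.max ?_ continuous_const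
        simp only [Matrix.mulVec, dotProduct]
        exact continuous_finset_sum _ fun j _ =>
          (continuous_const.mul (continuous_apply j))
      have hφnn : ∀ d, 0 ≤ φ d := fun d =>
        Finset.sum_nonneg fun i _ => le_max_right _ _
      have hφpos : ∀ d, d ≠ 0 → 0 < φ d := by
        intro d hd
        rcases lt_or_eq_of_le (hφnn d) with h | h
        · exact h
        · exfalso
          apply hd
          refine hrec d fun i => ?_
          have h0 := (Finset.sum_eq_zero_iff_of_nonneg
            (fun i _ => le_max_right (H.mulVec d i) 0)).mp h.symm i (Finset.mem_univ i)
          have h1 := le_max_left (H.mulVec d i) 0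
          linarith
      -- minimum of φ on the sphere
      have hsne : (Metric.sphere (0 : Fin p → ℝ) 1).Nonempty := by
        refine ⟨Pi.single ⟨0, hp⟩ 1, ?_⟩
        simp [Pi.norm_single]
      obtain ⟨d₀, hd₀mem, hd₀min⟩ :=
        (isCompact_sphere (0 : Fin p → ℝ) 1).exists_isMinOn hsne hφcont.continuousOn
      set ε : ℝ := φ d₀ with hε
      have hεpos : 0 < ε := by
        refine hφpos d₀ ?_
        intro h0
        have : ‖d₀‖ = 1 := by simpa using hd₀mem
        rw [h0] at this; simp at this
      set G : ℝ := ∑ i, max (g i) 0 with hG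
      have hG0 : 0 ≤ G := Finset.sum_nonneg fun i _ => le_max_right _ _
      rw [isBounded_iff_forall_norm_le]
      refine ⟨ε⁻¹ * G, ?_⟩
      intro u hu
      rcases eq_or_ne u 0 with rfl | hne
      · simp; positivity
      · have hM : (0 : ℝ) < ‖u‖ := norm_pos_iff.mpr hne
        set d : Fin p → ℝ := ‖u‖⁻¹ • u with hd
        have hdmem : d ∈ Metric.sphere (0 : Fin p → ℝ) 1 := by
          simp [hd, norm_smul, abs_of_pos (inv_pos.mpr hM), inv_mul_cancel₀ hM.ne']
        have hεd : ε ≤ φ d := hd₀min hdmem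
        have hud : u = ‖u‖ • d := by
          rw [hd, smul_smul, mul_inv_cancel₀ hM.ne', one_smul]
        have hmulcomp : ∀ i, H.mulVec u i = ‖u‖ * H.mulVec d i := by
          intro i
          conv_lhs => rw [hud]
          rw [Matrix.mulVec_smul]
          simp
        have hkey : ‖u‖ * φ d ≤ G := by
          have : ‖u‖ * φ d = ∑ i, max (H.mulVec u i) 0 := by
            rw [hφ, Finset.mul_sum]
            refine Finset.sum_congr rfl fun i _ => ?_
            rw [mul_max_of_nonneg _ _ (norm_nonneg u), mul_zero, hmulcomp i]
          rw [this, hG]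
          refine Finset.sum_le_sum fun i _ => ?_
          exact max_le_max (hu i) le_rfl
        have : ε * ‖u‖ ≤ G := by
          calc ε * ‖u‖ ≤ φ d * ‖u‖ := mul_le_mul_of_nonneg_right hεd (norm_nonneg u)
            _ = ‖u‖ * φ d := mul_comm _ _
            _ ≤ G := hkey
        rw [← mul_le_mul_iff_right₀ hεpos, mul_inv_cancel_left₀ hεpos.ne']
        exact this
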